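/- Let n ≥ 1 and let i, a, b ∈ ℕⁿ be vectors of natural numbers such that every entry of b is 0 or 1, ∑_t a_t = ∑_t b_t, a_t·b_t = 0 for every t, and i_t ≥ b_t for every t. Set N = ∑_t i_t (so that the entries of i + a − b are nonnegative and also sum to N). Then the multinomial coefficients satisfy N! / ∏_{t=1}^{n} (i_t + a_t − b_t)! ≤ N^{∑_t b_t} · N! / ∏_{t=1}^{n} i_t! . -/

import Mathlib

open Finset

/-- multinomial coefficient ratio estimate.  Let `i, a, b ∈ ℕⁿ` with every
entry of `b` equal to `0` or `1`, `∑ a = ∑ b`, `a` and `b` with disjoint supports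
(`a_t · b_t = 0`), and `b_t ≤ i_t` for all `t`.  With `N = ∑ i_t`, the multinomial
coefficients satisfy `N! / ∏ (i_t + a_t − b_t)! ≤ N^{∑ b} · N! / ∏ i_t!`. -/
theorem statement6 (n : ℕ) (hn : 1 ≤ n) (i a b : Fin n → ℕ)
    (hb : ∀ t, b t ≤ 1) (hsum : ∑ t, a t = ∑ t, b t)
    (hdisj : ∀ t, a t * b t = 0) (hib : ∀ t, b t ≤ i t) :
    (Nat.factorial (∑ t, i t) : ℚ) / ∏ t, (Nat.factorial (i t + a t - b t) : ℚ) ≤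
      ((∑ t, i t : ℕ) : ℚ) ^ (∑ t, b t) *
        ((Nat.factorial (∑ t, i t) : ℚ) / ∏ t, (Nat.factorial (i t) : ℚ)) := by
  set N := ∑ t, i t with hN
  have key : ∏ t, Nat.factorial (i t) ≤
      N ^ (∑ t, b t) * ∏ t, Nat.factorial (i t + a t - b t) := by
    rw [← Finset.prod_pow_eq_pow_sum, ← Finset.prod_mul_distrib]
    apply Finset.prod_le_prod'
    intro t _
    rcases Nat.le_one_iff_eq_zero_or_eq_one.mp (hb t) with h0 | h1
    · simpa [h0] using Nat.factorial_le (Nat.le_add_right (i t) (a t))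
    · have ha : a t = 0 := by have := hdisj t; simpa [h1] using this
      have hi1 : 1 ≤ i t := h1 ▸ hib t
      have hiN : i t ≤ N := Finset.single_le_sum (fun _ _ => Nat.zero_le _) (Finset.mem_univ t)
      rw [h1, ha, pow_one]
      calc Nat.factorial (i t) = i t * Nat.factorial (i t - 1) := by
            exact (Nat.mul_factorial_pred (by omega)).symm
        _ ≤ N * Nat.factorial (i t + 0 - 1) := by
            apply Nat.mul_le_mul hiN; simp
  have hP1 : (0:ℚ) < ∏ t, (Nat.factorial (i t + a t - b t) : ℚ) :=
    Finset.prod_pos fun t _ => by exact_mod_cast Nat.factorial_pos _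
  have hP2 : (0:ℚ) < ∏ t, (Nat.factorial (i t) : ℚ) :=
    Finset.prod_pos fun t _ => by exact_mod_cast Nat.factorial_pos _
  rw [mul_div_assoc', div_le_div_iff₀ hP1 hP2]
  have keyQ : (∏ t, (Nat.factorial (i t) : ℚ)) ≤
      (N:ℚ) ^ (∑ t, b t) * ∏ t, (Nat.factorial (i t + a t - b t) : ℚ) := by
    exact_mod_cast key
  have hfac : (0:ℚ) ≤ (Nat.factorial N : ℚ) := by positivity
  calc (Nat.factorial N : ℚ) * ∏ t, (Nat.factorial (i t) : ℚ)
      ≤ (Nat.factorial N : ℚ) * ((N:ℚ) ^ (∑ t, b t) * ∏ t, (Nat.factorial (i t + a t - b t) : ℚ)) :=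
        mul_le_mul_of_nonneg_left keyQ hfac
    _ = (N:ℚ) ^ (∑ t, b t) * (Nat.factorial N : ℚ) * ∏ t, (Nat.factorial (i t + a t - b t) : ℚ) := by ring
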